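/- (Simple bound) Let n ≥ 2, let a_1, …, a_n ∈ ℝ^d, U > 0, and let b ∈ {1,…,n}. Then the expected smoothness constant of b-nice sampling satisfies 𝓛(b) ≤ 𝓛_simple(b) := (n/b)·((b−1)/(n−1))·L̄ + (1/b)·((n−b)/(n−1))·L_max. -/

import Mathlib

open Finset Matrix

/-- `lamMax A` is the largest eigenvalue of a real symmetric matrix `A`,
expressed as the supremum of the Rayleigh quotient over unit vectors. -/
noncomputable def lamMax {d : ℕ} (A : Matrix (Fin d) (Fin d) ℝ) : ℝ :=
  sSup {r : ℝ | ∃ x : Fin d → ℝ, (∑ j, x j ^ 2) = 1 ∧ r = x ⬝ᵥ A.mulVec x}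

/-- Subsample smoothness constant `L_B = (U/|B|)·λ_max(∑_{j∈B} a_j a_jᵀ)`. -/
noncomputable def LB {n d : ℕ} (U : ℝ) (a : Fin n → Fin d → ℝ) (B : Finset (Fin n)) : ℝ :=
  (U / (B.card : ℝ)) * lamMax (∑ j ∈ B, Matrix.vecMulVec (a j) (a j))

/-- Individual smoothness constant `L_i = U‖a_i‖₂²`. -/
noncomputable def Lind {n d : ℕ} (U : ℝ) (a : Fin n → Fin d → ℝ) (i : Fin n) : ℝ :=
  U * ∑ j, a i j ^ 2

/-- The expected smoothness constant of `b`-nice sampling,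
`𝓛(b) = (1/C(n−1,b−1)) · max_i ∑_{B ⊆ [n], |B| = b, i ∈ B} L_B`. -/
noncomputable def expSmooth {n d : ℕ} (hn : 0 < n) (U : ℝ) (a : Fin n → Fin d → ℝ)
    (b : ℕ) : ℝ :=
  (1 / ((n - 1).choose (b - 1) : ℝ)) *
    Finset.univ.sup' (Finset.univ_nonempty_iff.mpr (Fin.pos_iff_nonempty.mp hn))
      (fun i : Fin n =>
        ∑ B ∈ (Finset.powersetCard b (Finset.univ : Finset (Fin n))).filter
          (fun B => i ∈ B), LB U a B)

section Aux

lemma dot_vecMulVec {d : ℕ} (v x : Fin d → ℝ) :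
    x ⬝ᵥ (Matrix.vecMulVec v v).mulVec x = (∑ k, v k * x k) ^ 2 := by
  simp only [dotProduct, Matrix.mulVec, Matrix.vecMulVec_apply, sq]
  rw [Finset.sum_mul_sum]
  refine Finset.sum_congr rfl fun i _ => ?_
  rw [Finset.mul_sum]
  refine Finset.sum_congr rfl fun j _ => ?_
  ring

lemma quad_sum {n d : ℕ} (a : Fin n → Fin d → ℝ) (B : Finset (Fin n)) (x : Fin d → ℝ) :
    x ⬝ᵥ (∑ j ∈ B, Matrix.vecMulVec (a j) (a j)).mulVec x
      = ∑ j ∈ B, (∑ k, a j k * x k) ^ 2 := by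
  induction B using Finset.cons_induction with
  | empty => simp
  | cons c s hc ih =>
    rw [Finset.sum_cons, Finset.sum_cons, Matrix.add_mulVec, dotProduct_add, ih,
      dot_vecMulVec]

lemma lamMax_sum_le {n d : ℕ} (a : Fin n → Fin d → ℝ) (B : Finset (Fin n)) :
    lamMax (∑ j ∈ B, Matrix.vecMulVec (a j) (a j)) ≤ ∑ j ∈ B, ∑ k, a j k ^ 2 := by
  apply Real.sSup_le
  · rintro r ⟨x, hx, rfl⟩
    rw [quad_sum]
    refine Finset.sum_le_sum fun j _ => ?_
    calc (∑ k, a j k * x k) ^ 2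
        ≤ (∑ k, a j k ^ 2) * ∑ k, x k ^ 2 :=
          Finset.sum_mul_sq_le_sq_mul_sq _ _ _
      _ = ∑ k, a j k ^ 2 := by rw [hx, mul_one]
  · exact Finset.sum_nonneg fun j _ => Finset.sum_nonneg fun k _ => sq_nonneg _

lemma card_powersetCard_filter_subset {α : Type*} [DecidableEq α] (s t : Finset α)
    (ht : t ⊆ s) (k : ℕ) (hk : t.card ≤ k) :
    ((Finset.powersetCard k s).filter (fun B => t ⊆ B)).card
      = (s.card - t.card).choose (k - t.card) := by
  rw [show s.card - t.card = (s \ t).card from (Finset.card_sdiff_of_subset ht).symm,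
    ← Finset.card_powersetCard]
  apply Finset.card_bij (fun B _ => B \ t)
  · intro B hB
    simp only [Finset.mem_filter, Finset.mem_powersetCard] at hB
    obtain ⟨⟨hBs, hBc⟩, htB⟩ := hB
    rw [Finset.mem_powersetCard]
    exact ⟨Finset.sdiff_subset_sdiff hBs le_rfl,
      by rw [Finset.card_sdiff_of_subset htB, hBc]⟩
  · intro B1 h1 B2 h2 he
    simp only [Finset.mem_filter, Finset.mem_powersetCard] at h1 h2
    have h := congrArg (fun C => C ∪ t) he
    simpa [Finset.sdiff_union_of_subset h1.2, Finset.sdiff_union_of_subset h2.2] using h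
  · intro C hC
    rw [Finset.mem_powersetCard] at hC
    have hdisj : Disjoint C t := Finset.disjoint_of_subset_left hC.1 Finset.sdiff_disjoint
    refine ⟨C ∪ t, ?_, ?_⟩
    · simp only [Finset.mem_filter, Finset.mem_powersetCard]
      refine ⟨⟨Finset.union_subset (hC.1.trans Finset.sdiff_subset) ht, ?_⟩,
        Finset.subset_union_right⟩
      rw [Finset.card_union_of_disjoint hdisj, hC.2]
      have := Finset.card_sdiff_of_subset ht
      omega
    · rw [Finset.union_sdiff_right, Finset.sdiff_eq_self_of_disjoint hdisj]

end Aux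

section Count

variable {n : ℕ}

lemma count_one (b : ℕ) (hb : 1 ≤ b) (i : Fin n) :
    ((Finset.powersetCard b (Finset.univ : Finset (Fin n))).filter
      (fun B => i ∈ B)).card = (n - 1).choose (b - 1) := by
  have h := card_powersetCard_filter_subset (Finset.univ : Finset (Fin n)) {i}
    (Finset.subset_univ _) b (by simpa using hb)
  simp only [Finset.singleton_subset_iff, Finset.card_singleton, Finset.card_univ,
    Fintype.card_fin] at h
  exact h

lemma count_two (b : ℕ) (hb : 2 ≤ b) (i j : Fin n) (hij : j ≠ i) :
    ((Finset.powersetCard b (Finset.univ : Finset (Fin n))).filter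
      (fun B => i ∈ B ∧ j ∈ B)).card = (n - 2).choose (b - 2) := by
  have h := card_powersetCard_filter_subset (Finset.univ : Finset (Fin n)) {i, j}
    (Finset.subset_univ _) b (by rw [Finset.card_pair (Ne.symm hij)]; exact hb)
  rw [Finset.card_pair (Ne.symm hij), Finset.card_univ, Fintype.card_fin] at h
  rw [← h]
  congr 1
  ext B
  simp [Finset.insert_subset_iff]

lemma count_two_one (i j : Fin n) (hij : j ≠ i) :
    ((Finset.powersetCard 1 (Finset.univ : Finset (Fin n))).filter
      (fun B => i ∈ B ∧ j ∈ B)).card = 0 := by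
  rw [Finset.card_eq_zero, Finset.filter_eq_empty_iff]
  rintro B hB ⟨hi, hj⟩
  rw [Finset.mem_powersetCard] at hB
  have : ({i, j} : Finset (Fin n)) ⊆ B := by
    simp [Finset.insert_subset_iff, hi, hj]
  have := Finset.card_le_card this
  rw [Finset.card_pair (Ne.symm hij), hB.2] at this
  omega

/-- key ℕ identity -/
lemma count_key (hn : 2 ≤ n) (b : ℕ) (hb : 1 ≤ b) (hbn : b ≤ n) (i j : Fin n)
    (hij : j ≠ i) :
    (n - 1) * ((Finset.powersetCard b (Finset.univ : Finset (Fin n))).filter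
      (fun B => i ∈ B ∧ j ∈ B)).card = (b - 1) * (n - 1).choose (b - 1) := by
  rcases eq_or_lt_of_le hb with h1 | h2
  · rw [← h1, count_two_one i j hij]
    simp
  · rw [count_two b h2 i j hij]
    have hs := Nat.add_one_mul_choose_eq (n - 2) (b - 2)
    have e1 : n - 2 + 1 = n - 1 := by omega
    have e2 : b - 2 + 1 = b - 1 := by omega
    rw [e1, e2] at hs
    rw [hs]
    ring

end Count

lemma final_alg (β ν C Li S M : ℝ) (hβ : 1 ≤ β) (hβν : β ≤ ν) (hν : 2 ≤ ν) (hC : 0 < C)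
    (hLiM : Li ≤ M) :
    (1/β) * (C * Li + (β-1)/(ν-1) * C * (S - Li)) ≤
      C * ((ν/β) * ((β-1)/(ν-1)) * ((1/ν) * S) + (1/β) * ((ν-β)/(ν-1)) * M) := by
  have hβ0 : (0:ℝ) < β := by linarith
  have hν1 : (0:ℝ) < ν - 1 := by linarith
  have hν0 : (0:ℝ) < ν := by linarith
  have key : C * ((ν/β) * ((β-1)/(ν-1)) * ((1/ν) * S) + (1/β) * ((ν-β)/(ν-1)) * M)
      - (1/β) * (C * Li + (β-1)/(ν-1) * C * (S - Li))
      = C * (ν - β) / ((ν - 1) * β) * (M - Li) := by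
    field_simp
    ring
  nlinarith [mul_nonneg (mul_nonneg hC.le (by linarith : (0:ℝ) ≤ ν - β))
    (by linarith : (0:ℝ) ≤ M - Li), mul_pos hν1 hβ0,
    div_nonneg (mul_nonneg hC.le (by linarith : (0:ℝ) ≤ ν - β)) (mul_pos hν1 hβ0).le,
    mul_nonneg (div_nonneg (mul_nonneg hC.le (by linarith : (0:ℝ) ≤ ν - β))
      (mul_pos hν1 hβ0).le) (by linarith : (0:ℝ) ≤ M - Li)]

/-- **Simple bound**: `𝓛(b) ≤ (n/b)·((b−1)/(n−1))·L̄ + (1/b)·((n−b)/(n−1))·L_max`. -/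
theorem simple_bound {n d : ℕ} (hn : 2 ≤ n) (a : Fin n → Fin d → ℝ)
    (U : ℝ) (hU : 0 < U) (b : ℕ) (hb : 1 ≤ b) (hbn : b ≤ n) :
    expSmooth (by omega) U a b ≤
      ((n : ℝ) / b) * (((b : ℝ) - 1) / ((n : ℝ) - 1)) *
          ((1 / (n : ℝ)) * ∑ i, Lind U a i) +
        (1 / (b : ℝ)) * (((n : ℝ) - (b : ℝ)) / ((n : ℝ) - 1)) *
          (Finset.univ.sup' (Finset.univ_nonempty_iff.mpr (Fin.pos_iff_nonempty.mp (by omega)))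
            (fun i => Lind U a i)) := by
  have hC1 : 0 < (n - 1).choose (b - 1) := Nat.choose_pos (by omega)
  have hC1R : (0:ℝ) < ((n - 1).choose (b - 1) : ℝ) := by exact_mod_cast hC1
  have hbR : (0:ℝ) < (b:ℝ) := by exact_mod_cast hb
  rw [expSmooth, one_div, inv_mul_le_iff₀ hC1R]
  apply Finset.sup'_le
  intro i _
  set L : Fin n → ℝ := Lind U a with hL
  set S : ℝ := ∑ j, L j with hS
  set M : ℝ := Finset.univ.sup' (Finset.univ_nonempty_iff.mpr
    (Fin.pos_iff_nonempty.mp (by omega : 0 < n))) (fun i => Lind U a i) with hM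
  set pc := (Finset.powersetCard b (Finset.univ : Finset (Fin n))) with hpc
  have step1 : ∑ B ∈ pc.filter (fun B => i ∈ B), LB U a B
      ≤ ∑ B ∈ pc.filter (fun B => i ∈ B), (1 / (b:ℝ)) * ∑ j ∈ B, L j := by
    refine Finset.sum_le_sum fun B hB => ?_
    rw [Finset.mem_filter, hpc, Finset.mem_powersetCard] at hB
    have hcard : B.card = b := hB.1.2
    rw [LB, hcard]
    have h1 : lamMax (∑ j ∈ B, Matrix.vecMulVec (a j) (a j))
        ≤ ∑ j ∈ B, ∑ k, a j k ^ 2 := lamMax_sum_le a B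
    calc U / (b:ℝ) * lamMax (∑ j ∈ B, Matrix.vecMulVec (a j) (a j))
        ≤ U / (b:ℝ) * ∑ j ∈ B, ∑ k, a j k ^ 2 := by
          exact mul_le_mul_of_nonneg_left h1 (by positivity)
      _ = (1 / (b:ℝ)) * ∑ j ∈ B, L j := by
          rw [Finset.mul_sum, Finset.mul_sum]
          refine Finset.sum_congr rfl fun j _ => ?_
          rw [hL, Lind]
          ring
  have step2 : ∑ B ∈ pc.filter (fun B => i ∈ B), (1 / (b:ℝ)) * ∑ j ∈ B, L j
      = (1 / (b:ℝ)) * ((((n - 1).choose (b - 1) : ℕ) : ℝ) * L i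
          + ∑ j ∈ Finset.univ.erase i,
            (((pc.filter (fun B => i ∈ B ∧ j ∈ B)).card : ℕ) : ℝ) * L j) := by
    rw [← Finset.mul_sum]
    congr 1
    calc ∑ B ∈ pc.filter (fun B => i ∈ B), ∑ j ∈ B, L j
        = ∑ B ∈ pc.filter (fun B => i ∈ B), ∑ j, if j ∈ B then L j else 0 := by
          refine Finset.sum_congr rfl fun B _ => ?_
          rw [Finset.sum_ite_mem, Finset.univ_inter]
      _ = ∑ j, ∑ B ∈ pc.filter (fun B => i ∈ B), if j ∈ B then L j else 0 :=
          Finset.sum_comm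
      _ = ∑ j, (((pc.filter (fun B => i ∈ B ∧ j ∈ B)).card : ℕ) : ℝ) * L j := by
          refine Finset.sum_congr rfl fun j _ => ?_
          rw [← Finset.sum_filter, Finset.filter_filter, Finset.sum_const, nsmul_eq_mul]
      _ = _ := by
          rw [← Finset.sum_erase_add _ _ (Finset.mem_univ i), add_comm]
          congr 2
          · congr 1
            rw [← count_one b hb i]
            congr 1
            apply Finset.filter_congr
            intro B _
            simp
  have step3 : ∀ j ∈ Finset.univ.erase i,
      (((pc.filter (fun B => i ∈ B ∧ j ∈ B)).card : ℕ) : ℝ)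
        = ((b:ℝ) - 1) / ((n:ℝ) - 1) * (((n - 1).choose (b - 1) : ℕ) : ℝ) := by
    intro j hj
    have hij : j ≠ i := (Finset.mem_erase.mp hj).1
    have hkey := count_key hn b hb hbn i j hij
    have hcast : ((n:ℝ) - 1) * (((pc.filter (fun B => i ∈ B ∧ j ∈ B)).card : ℕ) : ℝ)
        = ((b:ℝ) - 1) * (((n - 1).choose (b - 1) : ℕ) : ℝ) := by
      have := congrArg (fun x : ℕ => (x : ℝ)) hkey
      push_cast [Nat.cast_sub (by omega : 1 ≤ n), Nat.cast_sub hb] at this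
      exact_mod_cast this
    have hne : (n:ℝ) - 1 ≠ 0 := by
      have : (2:ℝ) ≤ (n:ℝ) := by exact_mod_cast hn
      linarith
    field_simp
    linarith [hcast]
  have step4 : ∑ j ∈ Finset.univ.erase i,
      (((pc.filter (fun B => i ∈ B ∧ j ∈ B)).card : ℕ) : ℝ) * L j
      = ((b:ℝ) - 1) / ((n:ℝ) - 1) * (((n - 1).choose (b - 1) : ℕ) : ℝ) * (S - L i) := by
    rw [Finset.sum_congr rfl (fun j hj => by rw [step3 j hj])]
    rw [← Finset.mul_sum, Finset.sum_erase_eq_sub (Finset.mem_univ i), ← hS]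
  calc ∑ B ∈ pc.filter (fun B => i ∈ B), LB U a B
      ≤ (1 / (b:ℝ)) * ((((n - 1).choose (b - 1) : ℕ) : ℝ) * L i
          + ((b:ℝ) - 1) / ((n:ℝ) - 1) * (((n - 1).choose (b - 1) : ℕ) : ℝ) * (S - L i)) := by
        rw [← step4]
        exact step1.trans (le_of_eq step2)
    _ ≤ _ := by
        refine final_alg (b:ℝ) (n:ℝ) _ (L i) S M ?_ ?_ ?_ hC1R ?_
        · exact_mod_cast hb
        · exact_mod_cast hbn
        · exact_mod_cast hn
        · exact Finset.le_sup' _ (Finset.mem_univ i)
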